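/- arXiv:2605.04364 — 2 statements merged into one kernel-verified Lean document; each statement's English description precedes it below -/
import Mathlib

section
/- Let z_t ∈ ℝ^d, y_t ∈ ℝ^p for t = 1,…,T, let λ > 0, and let M_t^{ols} := B_{t-1} G_{t-1}⁻¹ with B_{t-1} := ∑_{s=1}^{t-1} y_s z_sᵀ and G_t := λ I + ∑_{s=1}^t z_s z_sᵀ. Then for every comparator M ∈ ℝ^{p×d}, ∑_{t=1}^T ‖M_t^{ols} z_t − y_t‖² − ∑_{t=1}^T ‖M z_t − y_t‖² ≤ λ‖M‖_F² + ∑_{t=1}^T ‖y_t − M_t^{ols} z_t‖² · z_tᵀ G_t⁻¹ z_t ≤ λ‖M‖_F² + (max_{1≤t≤T} ‖y_t − M_t^{ols} z_t‖²) · d · log(1 + (∑_{t=1}^T ‖z_t‖²)/(λ d)). -/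
open Matrix
variable {d p : ℕ}

lemma myMulVec_vecMulVec (u v x : Fin d → ℝ) : (vecMulVec u v) *ᵥ x = (v ⬝ᵥ x) • u := by
  funext i
  simp only [mulVec, vecMulVec_apply, dotProduct, Pi.smul_apply, smul_eq_mul, Finset.sum_mul,
    Finset.mul_sum]
  exact Finset.sum_congr rfl fun k _ => by ring

lemma myVecMulVec_mul (u : Fin p → ℝ) (v : Fin d → ℝ) (B : Matrix (Fin d) (Fin d) ℝ) :
    vecMulVec u v * B = vecMulVec u (v ᵥ* B) := by
  ext i j
  simp [mul_apply, vecMulVec_apply, vecMul, dotProduct, Finset.mul_sum, mul_assoc]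

lemma myMul_vecMulVec (u : Fin d → ℝ) (v : Fin d → ℝ) (B : Matrix (Fin d) (Fin d) ℝ) :
    B * vecMulVec u v = vecMulVec (B *ᵥ u) v := by
  ext i j
  simp only [mul_apply, vecMulVec_apply, mulVec, dotProduct, Finset.sum_mul]
  exact Finset.sum_congr rfl fun k _ => by ring

lemma myPosSemidef_vecMulVec (z : Fin d → ℝ) : (vecMulVec z z).PosSemidef := by
  refine posSemidef_iff_dotProduct_mulVec.mpr ⟨?_, ?_⟩
  · ext i j; simp [vecMulVec_apply, mul_comm]
  · intro x
    simp only [star_trivial, myMulVec_vecMulVec, dotProduct_smul]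
    rw [smul_eq_mul, dotProduct_comm x z]
    exact mul_self_nonneg _

lemma myPosDef_smul_one {lam : ℝ} (hlam : 0 < lam) :
    (lam • (1 : Matrix (Fin d) (Fin d) ℝ)).PosDef := by
  refine posDef_iff_dotProduct_mulVec.mpr ⟨?_, ?_⟩
  · ext i j
    by_cases h : i = j <;> simp [one_apply, h, eq_comm]
  · intro x hx
    simp only [star_trivial, smul_mulVec, one_mulVec, dotProduct_smul, smul_eq_mul]
    have : 0 < x ⬝ᵥ x := by
      simpa using (dotProduct_star_self_pos_iff (v := x)).mpr hx
    positivity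

lemma quad_nonneg {Q : Matrix (Fin d) (Fin d) ℝ} (hQ : Q.PosSemidef) (x : Fin d → ℝ) :
    0 ≤ x ⬝ᵥ Q *ᵥ x := by simpa using hQ.dotProduct_mulVec_nonneg x

lemma detUnit {A : Matrix (Fin d) (Fin d) ℝ} (hA : A.PosDef) : IsUnit A.det :=
  isUnit_iff_ne_zero.mpr hA.det_pos.ne'

lemma myVecMulVec_mul_vecMulVec (u : Fin p → ℝ) (v w : Fin d → ℝ) (x : Fin d → ℝ) :
    vecMulVec u v * vecMulVec w x = (v ⬝ᵥ w) • vecMulVec u x := by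
  ext i j
  simp only [mul_apply, vecMulVec_apply, Matrix.smul_apply, smul_eq_mul, dotProduct, Finset.sum_mul]
  exact Finset.sum_congr rfl fun k _ => by ring

lemma sherman_morrison {A : Matrix (Fin d) (Fin d) ℝ} (hA : A.PosDef) (z : Fin d → ℝ) :
    (A + vecMulVec z z)⁻¹ =
      A⁻¹ - (1 + z ⬝ᵥ A⁻¹ *ᵥ z)⁻¹ • (A⁻¹ * vecMulVec z z * A⁻¹) := by
  have ha : 0 ≤ z ⬝ᵥ A⁻¹ *ᵥ z := quad_nonneg hA.inv.posSemidef z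
  set a := z ⬝ᵥ A⁻¹ *ᵥ z with ha_def
  have h1a : (0:ℝ) < 1 + a := by linarith
  have hAA : A * A⁻¹ = 1 := Matrix.mul_nonsing_inv A (detUnit hA)
  refine Matrix.inv_eq_right_inv ?_
  set W := vecMulVec z z * A⁻¹ with hW_def
  have hZN : vecMulVec z z * (A⁻¹ * vecMulVec z z * A⁻¹) = a • W := by
    rw [hW_def, myMul_vecMulVec z z A⁻¹, myVecMulVec_mul (A⁻¹ *ᵥ z) z A⁻¹,
      myVecMulVec_mul_vecMulVec z z (A⁻¹ *ᵥ z) (z ᵥ* A⁻¹),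
      myVecMulVec_mul z z A⁻¹]
  have hAN : A * ((1 + a)⁻¹ • (A⁻¹ * vecMulVec z z * A⁻¹))
      = (1 + a)⁻¹ • W := by
    rw [Matrix.mul_smul, ← Matrix.mul_assoc, ← Matrix.mul_assoc, hAA, Matrix.one_mul, hW_def]
  rw [Matrix.add_mul, Matrix.mul_sub, Matrix.mul_sub, hAA, hAN, Matrix.mul_smul, hZN,
    smul_smul, ← hW_def]
  have h2 : (1+a)⁻¹ • W + ((1+a)⁻¹ * a) • W = W := by
    rw [← add_smul, show (1+a)⁻¹ + (1+a)⁻¹ * a = 1 by field_simp, one_smul]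
  rw [sub_add_sub_comm, h2, add_sub_cancel_right]

lemma symm_dot {C : Matrix (Fin d) (Fin d) ℝ} (hC : Cᵀ = C) (v w : Fin d → ℝ) :
    v ⬝ᵥ C *ᵥ w = w ⬝ᵥ C *ᵥ v := by
  rw [dotProduct_mulVec, ← Matrix.mulVec_transpose, hC, dotProduct_comm]

lemma inv_symm {A : Matrix (Fin d) (Fin d) ℝ} (hAs : Aᵀ = A) : (A⁻¹)ᵀ = A⁻¹ := by
  rw [Matrix.transpose_nonsing_inv, hAs]

lemma mulVec_inv_add {A : Matrix (Fin d) (Fin d) ℝ} (hA : A.PosDef) (z : Fin d → ℝ)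
    (v : Fin d → ℝ) :
    (A + vecMulVec z z)⁻¹ *ᵥ v =
      A⁻¹ *ᵥ v - ((1 + z ⬝ᵥ A⁻¹ *ᵥ z)⁻¹ * (z ⬝ᵥ A⁻¹ *ᵥ v)) • (A⁻¹ *ᵥ z) := by
  rw [sherman_morrison hA, Matrix.sub_mulVec, Matrix.smul_mulVec,
    myMul_vecMulVec z z A⁻¹, myVecMulVec_mul (A⁻¹ *ᵥ z) z A⁻¹,
    myMulVec_vecMulVec, ← dotProduct_mulVec, smul_smul]

lemma step_identity {A : Matrix (Fin d) (Fin d) ℝ} (hA : A.PosDef) (hAs : Aᵀ = A)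
    (Bm : Matrix (Fin p) (Fin d) ℝ) (z : Fin d → ℝ) (y : Fin p → ℝ) :
    ((y - (Bm * A⁻¹) *ᵥ z) ⬝ᵥ (y - (Bm * A⁻¹) *ᵥ z)) *
        (1 - z ⬝ᵥ ((A + vecMulVec z z)⁻¹ *ᵥ z)) =
      y ⬝ᵥ y
        - (∑ i, (Bm + vecMulVec y z) i ⬝ᵥ ((A + vecMulVec z z)⁻¹ *ᵥ (Bm + vecMulVec y z) i))
        + ∑ i, Bm i ⬝ᵥ (A⁻¹ *ᵥ Bm i) := by
  have ha : 0 ≤ z ⬝ᵥ A⁻¹ *ᵥ z := quad_nonneg hA.inv.posSemidef z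
  set a := z ⬝ᵥ A⁻¹ *ᵥ z with ha_def
  have h1a : (0:ℝ) < 1 + a := by linarith
  set s := (1 + a)⁻¹ with hs_def
  have hCs : (A⁻¹)ᵀ = A⁻¹ := inv_symm hAs
  have hc : z ⬝ᵥ ((A + vecMulVec z z)⁻¹ *ᵥ z) = a - s * a * a := by
    rw [mulVec_inv_add hA, dotProduct_sub, dotProduct_smul, ← ha_def, smul_eq_mul]
  have hrow : ∀ i, (Bm + vecMulVec y z) i = Bm i + y i • z := by
    intro i; funext j; simp [vecMulVec_apply]
  have key : ∀ i, (Bm + vecMulVec y z) i ⬝ᵥ ((A + vecMulVec z z)⁻¹ *ᵥ (Bm + vecMulVec y z) i)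
      = (Bm i ⬝ᵥ A⁻¹ *ᵥ Bm i) + 2 * y i * (Bm i ⬝ᵥ A⁻¹ *ᵥ z) + y i ^ 2 * a
        - s * ((Bm i ⬝ᵥ A⁻¹ *ᵥ z) + y i * a) ^ 2 := by
    intro i
    rw [hrow, mulVec_inv_add hA]
    simp only [Matrix.mulVec_add, Matrix.mulVec_smul, dotProduct_add, dotProduct_sub,
      add_dotProduct, smul_dotProduct, dotProduct_smul, smul_eq_mul]
    rw [symm_dot hCs z (Bm i), ← ha_def]
    ring
  have hm : ∀ i, ((Bm * A⁻¹) *ᵥ z) i = Bm i ⬝ᵥ A⁻¹ *ᵥ z := by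
    intro i
    rw [← Matrix.mulVec_mulVec]
    rfl
  have hdot : (y - (Bm * A⁻¹) *ᵥ z) ⬝ᵥ (y - (Bm * A⁻¹) *ᵥ z)
      = ∑ i, (y i - Bm i ⬝ᵥ A⁻¹ *ᵥ z) * (y i - Bm i ⬝ᵥ A⁻¹ *ᵥ z) := by
    simp only [dotProduct, Pi.sub_apply, hm]
  have hyy : y ⬝ᵥ y = ∑ i, y i * y i := rfl
  rw [hdot, hc, hyy, Finset.sum_mul, ← Finset.sum_sub_distrib, ← Finset.sum_add_distrib]
  refine Finset.sum_congr rfl fun i _ => ?_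
  rw [key]
  rw [hs_def]
  field_simp
  ring

lemma comparator_nonneg {Gm : Matrix (Fin d) (Fin d) ℝ} (hG : Gm.PosDef) (hGs : Gmᵀ = Gm)
    (v b : Fin d → ℝ) :
    0 ≤ v ⬝ᵥ Gm *ᵥ v - 2 * (v ⬝ᵥ b) + b ⬝ᵥ Gm⁻¹ *ᵥ b := by
  have hGb : Gm *ᵥ (Gm⁻¹ *ᵥ b) = b := by
    rw [Matrix.mulVec_mulVec, Matrix.mul_nonsing_inv _ (detUnit hG), Matrix.one_mulVec]
  have h := quad_nonneg hG.posSemidef (v - Gm⁻¹ *ᵥ b)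
  simp only [Matrix.mulVec_sub, hGb, sub_dotProduct, dotProduct_sub] at h
  have h1 : (Gm⁻¹ *ᵥ b) ⬝ᵥ Gm *ᵥ v = v ⬝ᵥ b := by
    rw [← symm_dot hGs, hGb, dotProduct_comm]
  have h2 : (Gm⁻¹ *ᵥ b) ⬝ᵥ b = b ⬝ᵥ Gm⁻¹ *ᵥ b := dotProduct_comm _ _
  rw [h1, h2] at h
  linarith

lemma posSemidef_sum {ι : Type*} (s : Finset ι) (f : ι → Matrix (Fin d) (Fin d) ℝ)
    (hf : ∀ i ∈ s, (f i).PosSemidef) : (∑ i ∈ s, f i).PosSemidef := by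
  classical
  induction s using Finset.induction_on with
  | empty => simpa using Matrix.PosSemidef.zero
  | @insert a s' ha ih =>
    rw [Finset.sum_insert ha]
    exact (hf a (Finset.mem_insert_self a s')).add
      (ih fun i hi => hf i (Finset.mem_insert_of_mem hi))

lemma det_rank_one_update {A : Matrix (Fin d) (Fin d) ℝ} (hA : A.PosDef) (z : Fin d → ℝ) :
    (A + vecMulVec z z).det = A.det * (1 + z ⬝ᵥ A⁻¹ *ᵥ z) := by
  rw [vecMulVec_eq Unit, Matrix.det_add_replicateCol_mul_replicateRow (detUnit hA)]
  congr 1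
  rw [det_unique]
  simp only [Matrix.add_apply, Matrix.one_apply_eq, Matrix.mul_apply, Matrix.replicateRow_apply,
    Matrix.replicateCol_apply, dotProduct, Matrix.mulVec, Finset.sum_mul, Finset.mul_sum]
  congr 1
  rw [Finset.sum_comm]
  exact Finset.sum_congr rfl fun j _ => Finset.sum_congr rfl fun k _ => by ring

lemma ratio_le_log {a : ℝ} (ha : 0 ≤ a) : a / (1 + a) ≤ Real.log (1 + a) := by
  have h1 : (0:ℝ) < 1 + a := by linarith
  have h := Real.log_le_sub_one_of_pos (x := (1 + a)⁻¹) (by positivity)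
  rw [Real.log_inv] at h
  have h2 : a / (1 + a) = 1 - (1 + a)⁻¹ := by field_simp; ring
  linarith

lemma trace_eq_sum_eigen {A : Matrix (Fin d) (Fin d) ℝ} (hH : A.IsHermitian) :
    A.trace = ∑ i, hH.eigenvalues i := by
  rw [hH.trace_eq_sum_eigenvalues]
  simp

lemma det_le_trace_pow {A : Matrix (Fin d) (Fin d) ℝ} (hA : A.PosDef) (hd : 0 < d) :
    A.det ≤ (A.trace / d) ^ d := by
  have hH := hA.isHermitian
  have hev : ∀ i, 0 ≤ hH.eigenvalues i := fun i => (hA.eigenvalues_pos i).le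
  have hdet : A.det = ∏ i, hH.eigenvalues i := by
    rw [hH.det_eq_prod_eigenvalues]
    norm_num
  have htr : A.trace = ∑ i, hH.eigenvalues i := trace_eq_sum_eigen hH
  have hw : ∑ _i : Fin d, (1 / d : ℝ) = 1 := by
    simp [Finset.sum_const, Finset.card_univ]
    field_simp
  have hgm := Real.geom_mean_le_arith_mean_weighted Finset.univ (fun _ => (1 / d : ℝ))
    (fun i => hH.eigenvalues i) (fun i _ => by positivity) hw (fun i _ => hev i)
  have hsum : ∑ i, (1 / d : ℝ) * hH.eigenvalues i = A.trace / d := by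
    rw [htr, ← Finset.mul_sum]
    ring
  have hpow : (∏ i, (hH.eigenvalues i) ^ ((1:ℝ) / d)) ^ (d:ℕ) = ∏ i, hH.eigenvalues i := by
    rw [← Finset.prod_pow]
    refine Finset.prod_congr rfl fun i _ => ?_
    rw [← Real.rpow_natCast ((hH.eigenvalues i) ^ ((1:ℝ)/d)) d, ← Real.rpow_mul (hev i)]
    rw [one_div, inv_mul_cancel₀ (by exact_mod_cast hd.ne'), Real.rpow_one]
  rw [hdet, ← hpow, ← hsum]
  exact pow_le_pow_left₀ (Finset.prod_nonneg fun i _ => Real.rpow_nonneg (hev i) _)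
    (le_of_eq_of_le rfl (hgm.trans (le_of_eq (by ring)))) d

lemma mySum_mulVec {ι : Type*} (s : Finset ι) (A : ι → Matrix (Fin d) (Fin d) ℝ)
    (v : Fin d → ℝ) : (∑ i ∈ s, A i) *ᵥ v = ∑ i ∈ s, A i *ᵥ v := by
  funext j
  simp only [Matrix.mulVec, dotProduct, Matrix.sum_apply, Finset.sum_apply, Finset.sum_mul]
  exact Finset.sum_comm

lemma myDotProduct_sum {ι : Type*} (s : Finset ι) (v : Fin d → ℝ) (w : ι → Fin d → ℝ) :
    v ⬝ᵥ (∑ i ∈ s, w i) = ∑ i ∈ s, v ⬝ᵥ w i := by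
  simp only [dotProduct, Finset.sum_apply, Finset.mul_sum]
  exact Finset.sum_comm

lemma myDotProduct_self_nonneg (v : Fin d → ℝ) : 0 ≤ v ⬝ᵥ v :=
  Finset.sum_nonneg fun i _ => mul_self_nonneg _

lemma tele_sum (f : ℕ → ℝ) (n : ℕ) :
    ∑ t ∈ Finset.Icc 1 n, (f t - f (t - 1)) = f n - f 0 := by
  induction n with
  | zero => simp
  | succ k ih =>
    rw [Finset.sum_Icc_succ_top (Nat.succ_le_succ (Nat.zero_le k)), ih]
    simp only [Nat.add_sub_cancel]
    ring

/-- the classical regret bound for regularized online least squares.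
With `G_t = λI + ∑_{s≤t} z_s z_sᵀ`, `B_{t-1} = ∑_{s<t} y_s z_sᵀ`, and OLS iterate
`M_t^{ols} = B_{t-1} G_{t-1}⁻¹`, for every comparator `M`,
`∑‖M_t^{ols} z_t − y_t‖² − ∑‖M z_t − y_t‖²
   ≤ λ‖M‖_F² + ∑ ‖y_t − M_t^{ols} z_t‖² · z_tᵀG_t⁻¹z_t
   ≤ λ‖M‖_F² + (max_t ‖y_t − M_t^{ols} z_t‖²) · d · log(1 + ∑‖z_t‖²/(λd))`. -/
theorem ols_regret
    (d p T : ℕ) (hT : 1 ≤ T) (lam : ℝ) (hlam : 0 < lam)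
    (z : ℕ → Fin d → ℝ) (y : ℕ → Fin p → ℝ)
    (G : ℕ → Matrix (Fin d) (Fin d) ℝ)
    (hG : ∀ t, G t = lam • (1 : Matrix (Fin d) (Fin d) ℝ) +
      ∑ s ∈ Finset.Icc 1 t, Matrix.vecMulVec (z s) (z s))
    (B : ℕ → Matrix (Fin p) (Fin d) ℝ)
    (hB : ∀ t, B t = ∑ s ∈ Finset.Icc 1 t, Matrix.vecMulVec (y s) (z s))
    (Mols : ℕ → Matrix (Fin p) (Fin d) ℝ)
    (hM : ∀ t, Mols t = B (t - 1) * (G (t - 1))⁻¹)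
    (M : Matrix (Fin p) (Fin d) ℝ) :
    (∑ t ∈ Finset.Icc 1 T,
        dotProduct ((Mols t).mulVec (z t) - y t) ((Mols t).mulVec (z t) - y t)
      - ∑ t ∈ Finset.Icc 1 T,
        dotProduct (M.mulVec (z t) - y t) (M.mulVec (z t) - y t)
    ≤ lam * (∑ i, ∑ j, (M i j) ^ 2)
      + ∑ t ∈ Finset.Icc 1 T,
          dotProduct (y t - (Mols t).mulVec (z t)) (y t - (Mols t).mulVec (z t))
            * dotProduct (z t) ((G t)⁻¹.mulVec (z t))) ∧
    (lam * (∑ i, ∑ j, (M i j) ^ 2)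
      + ∑ t ∈ Finset.Icc 1 T,
          dotProduct (y t - (Mols t).mulVec (z t)) (y t - (Mols t).mulVec (z t))
            * dotProduct (z t) ((G t)⁻¹.mulVec (z t))
    ≤ lam * (∑ i, ∑ j, (M i j) ^ 2)
      + ((Finset.Icc 1 T).sup' (Finset.nonempty_Icc.mpr hT)
            (fun t => dotProduct (y t - (Mols t).mulVec (z t))
              (y t - (Mols t).mulVec (z t))))
        * d * Real.log (1 + (∑ t ∈ Finset.Icc 1 T, dotProduct (z t) (z t)) / (lam * d))) := by
  -- basic structural facts
  have hGpd : ∀ t, (G t).PosDef := by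
    intro t; rw [hG t]
    exact (myPosDef_smul_one hlam).add_posSemidef
      (posSemidef_sum _ _ fun s _ => myPosSemidef_vecMulVec (z s))
  have hGs : ∀ t, (G t)ᵀ = G t := by
    intro t; rw [hG t, Matrix.transpose_add, Matrix.transpose_smul, Matrix.transpose_one,
      Matrix.transpose_sum]
    congr 1
    refine Finset.sum_congr rfl fun s _ => ?_
    ext i j
    simp [Matrix.transpose_apply, vecMulVec_apply, mul_comm]
  have hGstep : ∀ t, G (t + 1) = G t + vecMulVec (z (t + 1)) (z (t + 1)) := by
    intro t
    rw [hG, hG, Finset.sum_Icc_succ_top (Nat.succ_le_succ (Nat.zero_le t)), add_assoc]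
  have hBstep : ∀ t, B (t + 1) = B t + vecMulVec (y (t + 1)) (z (t + 1)) := by
    intro t
    rw [hB, hB, Finset.sum_Icc_succ_top (Nat.succ_le_succ (Nat.zero_le t))]
  -- abbreviations
  set L : ℕ → ℝ := fun t => (y t - (Mols t) *ᵥ (z t)) ⬝ᵥ (y t - (Mols t) *ᵥ (z t)) with hL
  set c : ℕ → ℝ := fun t => z t ⬝ᵥ ((G t)⁻¹ *ᵥ z t) with hc
  set F : ℕ → ℝ := fun t => ∑ i, B t i ⬝ᵥ ((G t)⁻¹ *ᵥ B t i) with hF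
  have hLt : ∀ t, dotProduct (y t - (Mols t).mulVec (z t))
      (y t - (Mols t).mulVec (z t)) = L t := fun t => rfl
  have hct : ∀ t, dotProduct (z t) ((G t)⁻¹.mulVec (z t)) = c t := fun t => rfl
  have hc0 : ∀ t, 0 ≤ c t := fun t => quad_nonneg (hGpd t).inv.posSemidef (z t)
  have hL0 : ∀ t, 0 ≤ L t := fun t => myDotProduct_self_nonneg _
  have hF0 : F 0 = 0 := by
    rw [hF]
    simp only
    refine Finset.sum_eq_zero fun i _ => ?_
    have : B 0 i = 0 := by funext j; rw [hB]; simp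
    rw [this, zero_dotProduct]
  -- per-step identity
  have hLdec : ∀ t ∈ Finset.Icc 1 T, L t = L t * c t + (y t ⬝ᵥ y t - (F t - F (t - 1))) := by
    intro t ht
    have ht1 : 1 ≤ t := (Finset.mem_Icc.mp ht).1
    obtain ⟨k, rfl⟩ : ∃ k, t = k + 1 := ⟨t - 1, by omega⟩
    have hMk : Mols (k + 1) = B k * (G k)⁻¹ := by
      rw [hM]; simp
    have hstep := step_identity (hGpd k) (hGs k) (B k) (z (k + 1)) (y (k + 1))
    rw [← hGstep k, ← hBstep k, ← hMk] at hstep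
    have hFk : F (k + 1) = ∑ i, B (k+1) i ⬝ᵥ ((G (k+1))⁻¹ *ᵥ B (k+1) i) := rfl
    have hFk' : F k = ∑ i, B k i ⬝ᵥ ((G k)⁻¹ *ᵥ B k i) := rfl
    have hLk : L (k + 1) = (y (k+1) - (Mols (k+1)) *ᵥ (z (k+1))) ⬝ᵥ
      (y (k+1) - (Mols (k+1)) *ᵥ (z (k+1))) := rfl
    have hck : c (k + 1) = z (k+1) ⬝ᵥ ((G (k+1))⁻¹ *ᵥ z (k+1)) := rfl
    simp only [Nat.add_sub_cancel]
    rw [hLk, hck, hFk, hFk']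
    nlinarith [hstep]
  -- telescoping sum
  have hsum1 : ∑ t ∈ Finset.Icc 1 T, L t
      = (∑ t ∈ Finset.Icc 1 T, L t * c t) + (∑ t ∈ Finset.Icc 1 T, y t ⬝ᵥ y t)
        - (F T - F 0) := by
    rw [Finset.sum_congr rfl hLdec, Finset.sum_add_distrib, Finset.sum_sub_distrib,
      tele_sum F T]
    ring
  -- comparator inequality
  have per_i : ∀ i, 0 ≤ lam * (∑ j, (M i j) ^ 2)
      + (∑ t ∈ Finset.Icc 1 T, ((M *ᵥ z t) i - y t i) * ((M *ᵥ z t) i - y t i))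
      - (∑ t ∈ Finset.Icc 1 T, y t i * y t i)
      + B T i ⬝ᵥ ((G T)⁻¹ *ᵥ B T i) := by
    intro i
    have hbrow : B T i = ∑ t ∈ Finset.Icc 1 T, y t i • z t := by
      funext j
      rw [hB]
      simp [Matrix.sum_apply, vecMulVec_apply]
    have hvb : M i ⬝ᵥ B T i = ∑ t ∈ Finset.Icc 1 T, y t i * (M i ⬝ᵥ z t) := by
      rw [hbrow, myDotProduct_sum]
      exact Finset.sum_congr rfl fun s _ => by rw [dotProduct_smul, smul_eq_mul]
    have hvGv : M i ⬝ᵥ ((G T) *ᵥ M i)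
        = lam * (M i ⬝ᵥ M i) + ∑ t ∈ Finset.Icc 1 T, (M i ⬝ᵥ z t) ^ 2 := by
      rw [hG, Matrix.add_mulVec, dotProduct_add, Matrix.smul_mulVec,
        Matrix.one_mulVec, dotProduct_smul, mySum_mulVec, myDotProduct_sum, smul_eq_mul]
      congr 1
      refine Finset.sum_congr rfl fun s _ => ?_
      rw [myMulVec_vecMulVec, dotProduct_smul, smul_eq_mul, dotProduct_comm (z s) (M i), sq]
    have hbase := comparator_nonneg (hGpd T) (hGs T) (M i) (B T i)
    have hvv : ∑ j, (M i j) ^ 2 = M i ⬝ᵥ M i := by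
      simp [dotProduct, sq]
    have hmvz : ∀ t, (M *ᵥ z t) i = M i ⬝ᵥ z t := fun t => rfl
    have hexp : ∑ t ∈ Finset.Icc 1 T, ((M *ᵥ z t) i - y t i) * ((M *ᵥ z t) i - y t i)
        = (∑ t ∈ Finset.Icc 1 T, (M i ⬝ᵥ z t) ^ 2)
          - 2 * (∑ t ∈ Finset.Icc 1 T, y t i * (M i ⬝ᵥ z t))
          + ∑ t ∈ Finset.Icc 1 T, y t i * y t i := by
      rw [Finset.mul_sum, ← Finset.sum_sub_distrib, ← Finset.sum_add_distrib]
      exact Finset.sum_congr rfl fun t _ => by rw [hmvz]; ring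
    rw [hexp, hvv]
    nlinarith [hbase, hvGv, hvb]
  have hcomp : 0 ≤ lam * (∑ i, ∑ j, (M i j) ^ 2)
      + (∑ t ∈ Finset.Icc 1 T, (M *ᵥ z t - y t) ⬝ᵥ (M *ᵥ z t - y t))
      - (∑ t ∈ Finset.Icc 1 T, y t ⬝ᵥ y t) + F T := by
    have h1 := Finset.sum_nonneg fun i (_ : i ∈ (Finset.univ : Finset (Fin p))) => per_i i
    rw [Finset.sum_add_distrib, Finset.sum_sub_distrib, Finset.sum_add_distrib,
      ← Finset.mul_sum] at h1
    rw [show (∑ i, ∑ t ∈ Finset.Icc 1 T, ((M *ᵥ z t) i - y t i) * ((M *ᵥ z t) i - y t i))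
        = ∑ t ∈ Finset.Icc 1 T, (M *ᵥ z t - y t) ⬝ᵥ (M *ᵥ z t - y t) from ?_,
      show (∑ i, ∑ t ∈ Finset.Icc 1 T, y t i * y t i)
        = ∑ t ∈ Finset.Icc 1 T, y t ⬝ᵥ y t from ?_] at h1
    · exact h1
    · rw [Finset.sum_comm]
      exact Finset.sum_congr rfl fun t _ => rfl
    · rw [Finset.sum_comm]
      exact Finset.sum_congr rfl fun t _ => by
        simp [dotProduct, Pi.sub_apply]
  -- flip sign in first statement's losses
  have hflip : ∀ t, dotProduct ((Mols t).mulVec (z t) - y t)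
      ((Mols t).mulVec (z t) - y t) = L t := by
    intro t
    have : (Mols t).mulVec (z t) - y t = -(y t - (Mols t) *ᵥ (z t)) := by
      funext j; simp
    rw [dotProduct, this]
    simp only [Pi.neg_apply, neg_mul_neg]
    rfl
  constructor
  · -- Part 1
    simp only [hflip, hLt, hct]
    have := hcomp
    have := hsum1
    linarith
  · -- Part 2
    simp only [hLt, hct]
    set S := ∑ t ∈ Finset.Icc 1 T, dotProduct (z t) (z t) with hS
    have hS0 : 0 ≤ S := Finset.sum_nonneg fun t _ => myDotProduct_self_nonneg (z t)
    set maxL := (Finset.Icc 1 T).sup' (Finset.nonempty_Icc.mpr hT) L with hmaxL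
    have hmaxmem : ∀ t ∈ Finset.Icc 1 T, L t ≤ maxL := fun t ht => Finset.le_sup' L ht
    have hmax0 : 0 ≤ maxL :=
      le_trans (hL0 T) (hmaxmem T (Finset.mem_Icc.mpr ⟨hT, le_refl T⟩))
    have hdet0 : ∀ t, 0 < (G t).det := fun t => (hGpd t).det_pos
    have hclog : ∀ t ∈ Finset.Icc 1 T,
        c t ≤ Real.log ((G t).det) - Real.log ((G (t - 1)).det) := by
      intro t ht
      have ht1 : 1 ≤ t := (Finset.mem_Icc.mp ht).1
      obtain ⟨k, rfl⟩ : ∃ k, t = k + 1 := ⟨t - 1, by omega⟩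
      have ha : 0 ≤ z (k+1) ⬝ᵥ (G k)⁻¹ *ᵥ z (k+1) := quad_nonneg (hGpd k).inv.posSemidef _
      set a := z (k+1) ⬝ᵥ (G k)⁻¹ *ᵥ z (k+1) with hadef
      have h1a : (0:ℝ) < 1 + a := by linarith
      have hcval : c (k+1) = a - (1+a)⁻¹ * a * a := by
        have h0 : c (k+1) = z (k+1) ⬝ᵥ ((G (k+1))⁻¹ *ᵥ z (k+1)) := rfl
        rw [h0, hGstep k, mulVec_inv_add (hGpd k), dotProduct_sub, dotProduct_smul,
          ← hadef, smul_eq_mul]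
      have hratio : a - (1+a)⁻¹ * a * a = a / (1 + a) := by field_simp; ring
      have hdet : (G (k+1)).det = (G k).det * (1 + a) := by
        rw [hGstep k, det_rank_one_update (hGpd k), ← hadef]
      rw [hcval, hratio, Nat.add_sub_cancel, hdet, Real.log_mul (hdet0 k).ne' h1a.ne']
      have := ratio_le_log ha
      linarith
    have hsumc : ∑ t ∈ Finset.Icc 1 T, c t
        ≤ Real.log ((G T).det) - Real.log ((G 0).det) := by
      calc ∑ t ∈ Finset.Icc 1 T, c t
          ≤ ∑ t ∈ Finset.Icc 1 T, (Real.log ((G t).det) - Real.log ((G (t-1)).det)) :=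
            Finset.sum_le_sum hclog
        _ = _ := tele_sum (fun t => Real.log ((G t).det)) T
    have hLc : ∑ t ∈ Finset.Icc 1 T, L t * c t ≤ maxL * ∑ t ∈ Finset.Icc 1 T, c t := by
      rw [Finset.mul_sum]
      exact Finset.sum_le_sum fun t ht => mul_le_mul_of_nonneg_right (hmaxmem t ht) (hc0 t)
    rcases Nat.eq_zero_or_pos d with hd | hd
    · subst hd
      have hczero : ∀ t, c t = 0 := by
        intro t
        show z t ⬝ᵥ _ = 0
        simp [dotProduct]
      have hz : ∑ t ∈ Finset.Icc 1 T, L t * c t = 0 :=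
        Finset.sum_eq_zero fun t _ => by rw [hczero, mul_zero]
      rw [hz]
      simp
    · have hd' : (0:ℝ) < d := by exact_mod_cast hd
      have htr : (G T).trace = lam * d + S := by
        have htrv : ∀ (u : Fin d → ℝ), (vecMulVec u u).trace = u ⬝ᵥ u := fun u => by
          simp [Matrix.trace, Matrix.diag, vecMulVec_apply, dotProduct]
        rw [hG T, Matrix.trace_add, Matrix.trace_smul, Matrix.trace_one, Matrix.trace_sum,
          Finset.sum_congr rfl fun t (_ : t ∈ Finset.Icc 1 T) => htrv (z t)]
        simp [smul_eq_mul]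
        exact hS.symm
      have hdetle : (G T).det ≤ ((lam * d + S)/d)^d := by
        have h := det_le_trace_pow (hGpd T) hd
        rwa [htr] at h
      have hpos : 0 < (lam * d + S)/d := by positivity
      have hlog1 : Real.log ((G T).det) ≤ d * Real.log ((lam*d+S)/d) := by
        calc Real.log ((G T).det) ≤ Real.log (((lam*d+S)/d)^d) :=
              (Real.log_le_log_iff (hdet0 T) (pow_pos hpos d)).mpr hdetle
          _ = d * Real.log ((lam*d+S)/d) := by rw [Real.log_pow]
      have hdetG0 : (G 0).det = lam ^ d := by
        rw [hG 0]
        simp [Matrix.det_smul]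
      have hlogG0 : Real.log ((G 0).det) = d * Real.log lam := by
        rw [hdetG0, Real.log_pow]
      have harg : (lam*d+S)/d / lam = 1 + S/(lam*d) := by
        rw [div_div, one_add_div (by positivity : lam*(d:ℝ) ≠ 0), mul_comm (d:ℝ) lam]
      have hdiv : (d:ℝ) * Real.log ((lam*d+S)/d) - d * Real.log lam
          = d * Real.log (1 + S/(lam*d)) := by
        rw [← mul_sub, ← Real.log_div hpos.ne' hlam.ne', harg]
      have hfinal : Real.log ((G T).det) - Real.log ((G 0).det)
          ≤ d * Real.log (1 + S/(lam*d)) := by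
        rw [hlogG0]
        linarith
      have hchain : ∑ t ∈ Finset.Icc 1 T, L t * c t
          ≤ maxL * (d * Real.log (1 + S/(lam*d))) := by
        calc ∑ t ∈ Finset.Icc 1 T, L t * c t
            ≤ maxL * ∑ t ∈ Finset.Icc 1 T, c t := hLc
          _ ≤ maxL * (Real.log ((G T).det) - Real.log ((G 0).det)) :=
              mul_le_mul_of_nonneg_left hsumc hmax0
          _ ≤ maxL * (d * Real.log (1 + S/(lam*d))) :=
              mul_le_mul_of_nonneg_left hfinal hmax0
      rw [mul_assoc]
      linarith
end

section
/- Let A ∈ ℝ^{n×n} satisfy A = S J S⁻¹ where J is block diagonal with Jordan blocks of size at most r, all eigenvalues of A are real and contained in [−1, 1], and set κ_A := ‖S‖ ‖S⁻¹‖. Then the filtered series satisfies ∑_{s=0}^∞ ‖(A² − I)^r A^s‖ ≤ r (2e²)^r n κ_A, where ‖·‖ is the operator norm; in particular the bound is independent of the spectral gap of A. -/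
/-- The operator norm of a matrix induced by the Euclidean (ℓ²) norms. -/
noncomputable def opNorm {𝕜 : Type*} [RCLike 𝕜] {m n : Type*} [Fintype m] [Fintype n]
    [DecidableEq n] (A : Matrix m n 𝕜) : ℝ :=
  ‖LinearMap.toContinuousLinearMap (Matrix.toEuclideanLin A)‖

/-- The nilpotent upper shift matrix: `N i (i+1) = 1`, all other entries `0`. -/
def shiftMatrix (K : Type*) [Ring K] (m : ℕ) : Matrix (Fin m) (Fin m) K :=
  Matrix.of fun i j => if (i : ℕ) + 1 = (j : ℕ) then 1 else 0

/-- The Jordan block `λ I + N` of size `m` with eigenvalue `λ`. -/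
noncomputable def jordanBlock (K : Type*) [Ring K] (lam : K) (m : ℕ) :
    Matrix (Fin m) (Fin m) K :=
  lam • (1 : Matrix (Fin m) (Fin m) K) + shiftMatrix K m

/-- `A = S J S⁻¹` over `ℝ`, where `J` is block diagonal with Jordan blocks of size at
most `r` whose (real) eigenvalues lie in `[−1, 1]`, and `κA = ‖S‖ ‖S⁻¹‖`. -/
def HasRealJordanForm (n r : ℕ) (A : Matrix (Fin n) (Fin n) ℝ) (κA : ℝ) : Prop :=
  ∃ (b : ℕ) (msize : Fin b → ℕ) (lam : Fin b → ℝ)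
    (S : Matrix (Fin n) ((i : Fin b) × Fin (msize i)) ℝ)
    (S' : Matrix ((i : Fin b) × Fin (msize i)) (Fin n) ℝ),
      (∀ i, msize i ≤ r) ∧ (∀ i, lam i ∈ Set.Icc (-1 : ℝ) 1) ∧
      S * S' = 1 ∧ S' * S = 1 ∧
      A = S * Matrix.blockDiagonal' (fun i => jordanBlock ℝ (lam i) (msize i)) * S' ∧
      κA = opNorm S * opNorm S'

open scoped Matrix.Norms.L2Operator
open Polynomial Finset

lemma opNorm_eq_norm {m n : Type*} [Fintype m] [Fintype n] [DecidableEq n]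
    (A : Matrix m n ℝ) : opNorm A = ‖A‖ := rfl

lemma abs_coord_le {ι : Type*} [Fintype ι] (x : EuclideanSpace ℝ ι) (q : ι) : |x q| ≤ ‖x‖ := by
  rw [EuclideanSpace.norm_eq]
  rw [← Real.sqrt_sq_eq_abs]
  apply Real.sqrt_le_sqrt
  have : |x q|^2 ≤ ∑ i, ‖x i‖ ^ 2 := by
    refine Finset.single_le_sum (f := fun i => ‖x i‖^2) (fun i _ => by positivity) (Finset.mem_univ q) |>.trans_eq' ?_
    simp [sq_abs, Real.norm_eq_abs]
  simpa [sq_abs] using this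

lemma norm_stdBasisMatrix_le {m n : Type*} [Fintype m] [Fintype n] [DecidableEq m] [DecidableEq n]
    (p : m) (q : n) (c : ℝ) : ‖Matrix.single p q c‖ ≤ |c| := by
  rw [Matrix.l2_opNorm_def]
  apply ContinuousLinearMap.opNorm_le_bound _ (abs_nonneg c)
  intro x
  have hx : (Matrix.toEuclideanLin (Matrix.single p q c)) x
      = EuclideanSpace.single p (c * x q) := by
    ext i
    simp only [Matrix.toEuclideanLin_apply, Matrix.mulVec, Matrix.single,
      dotProduct, Matrix.of_apply, EuclideanSpace.single_apply, ite_mul, zero_mul]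
    rcases eq_or_ne i p with h | h
    · subst h; simp [Matrix.mulVec, dotProduct, ite_and, Finset.sum_ite_eq]
    · simp [Matrix.mulVec, dotProduct, ite_and, h, Ne.symm h]
  simp only [LinearEquiv.trans_apply, LinearMap.coe_toContinuousLinearMap', hx,
    EuclideanSpace.norm_single, Real.norm_eq_abs, abs_mul]
  exact mul_le_mul_of_nonneg_left (abs_coord_le x q) (abs_nonneg c)

lemma norm_le_sum_abs {m n : Type*} [Fintype m] [Fintype n] [DecidableEq m] [DecidableEq n]
    (A : Matrix m n ℝ) : ‖A‖ ≤ ∑ p, ∑ q, |A p q| := by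
  conv_lhs => rw [Matrix.matrix_eq_sum_single A]
  refine (norm_sum_le _ _).trans (Finset.sum_le_sum fun p _ => ?_)
  refine (norm_sum_le _ _).trans (Finset.sum_le_sum fun q _ => ?_)
  exact norm_stdBasisMatrix_le p q (A p q)


lemma shiftMatrix_pow_apply (m k : ℕ) (u v : Fin m) :
    (shiftMatrix ℝ m ^ k) u v = if (u : ℕ) + k = (v : ℕ) then 1 else 0 := by
  induction k generalizing v with
  | zero =>
      rw [pow_zero]
      simp [Matrix.one_apply, Fin.val_eq_val]
  | succ k ih =>
      rw [pow_succ, Matrix.mul_apply]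
      simp only [ih]
      simp only [shiftMatrix, Matrix.of_apply]
      by_cases hv : (u : ℕ) + (k + 1) = (v : ℕ)
      · have hx : (u : ℕ) + k < m := by omega
        rw [if_pos hv, Finset.sum_eq_single (⟨(u : ℕ) + k, hx⟩ : Fin m)]
        · rw [if_pos (by simp), if_pos (by simp only [Fin.val_mk]; omega), one_mul]
        · intro x _ hx'
          have h1 : ¬((u : ℕ) + k = (x : ℕ)) := by
            intro h; exact hx' (Fin.ext (by simp [← h]))
          rw [if_neg h1, zero_mul]
        · intro h; exact absurd (Finset.mem_univ _) h
      · rw [if_neg hv, Finset.sum_eq_zero]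
        intro x _
        by_cases h1 : (u : ℕ) + k = (x : ℕ)
        · rw [if_neg (show ¬((x : ℕ) + 1 = (v : ℕ)) by omega), mul_zero]
        · rw [if_neg h1, zero_mul]

lemma aeval_shift_apply {m : ℕ} (p : Polynomial ℝ) (u v : Fin m) :
    (Polynomial.aeval (shiftMatrix ℝ m) p) u v
      = if (u : ℕ) ≤ (v : ℕ) then p.coeff ((v : ℕ) - (u : ℕ)) else 0 := by
  rw [Polynomial.aeval_eq_sum_range, Matrix.sum_apply]
  simp only [Matrix.smul_apply, shiftMatrix_pow_apply, smul_eq_mul, mul_ite, mul_one, mul_zero]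
  by_cases huv : (u : ℕ) ≤ (v : ℕ)
  · rw [if_pos huv]
    by_cases hd : (v : ℕ) - (u : ℕ) < p.natDegree + 1
    · rw [Finset.sum_eq_single ((v : ℕ) - (u : ℕ))]
      · rw [if_pos (by omega)]
      · intro i _ hi; rw [if_neg (by omega)]
      · intro h; exact absurd (Finset.mem_range.2 hd) h
    · rw [Finset.sum_eq_zero, Polynomial.coeff_eq_zero_of_natDegree_lt (by omega)]
      intro i hi; rw [if_neg]
      have := Finset.mem_range.1 hi; omega
  · rw [if_neg huv, Finset.sum_eq_zero]
    intro i _; rw [if_neg (by omega)]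

lemma key_pointwise (lam : ℝ) (hlam : |lam| ≤ 1) (r j1 j2 c : ℕ)
    (h1 : j1 + c < r) (h2 : j2 + c < r) :
    |lam - 1| ^ (r - j1) * |lam + 1| ^ (r - j2) ≤ 2 ^ r * (1 - |lam|) ^ (c + 1) := by
  have hl := abs_le.1 hlam
  rcases le_or_gt 0 lam with h0 | h0
  · have habs : |lam| = lam := abs_of_nonneg h0
    have e1 : |lam - 1| ^ (r - j1) ≤ (1 - |lam|) ^ (c + 1) := by
      rw [abs_of_nonpos (by linarith), habs]
      rw [show -(lam - 1) = 1 - lam by ring]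
      exact pow_le_pow_of_le_one (by linarith) (by linarith) (by omega)
    have e2 : |lam + 1| ^ (r - j2) ≤ 2 ^ r := by
      calc |lam + 1| ^ (r - j2) ≤ 2 ^ (r - j2) := by
            refine pow_le_pow_left₀ (abs_nonneg _) ?_ _
            rw [abs_of_nonneg (by linarith)]; linarith
        _ ≤ 2 ^ r := pow_le_pow_right₀ (by norm_num) (by omega)
    calc |lam - 1| ^ (r - j1) * |lam + 1| ^ (r - j2)
        ≤ (1 - |lam|) ^ (c + 1) * 2 ^ r :=
          mul_le_mul e1 e2 (by positivity) (pow_nonneg (by linarith) _)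
      _ = 2 ^ r * (1 - |lam|) ^ (c + 1) := mul_comm _ _
  · have habs : |lam| = -lam := abs_of_neg h0
    have e1 : |lam + 1| ^ (r - j2) ≤ (1 - |lam|) ^ (c + 1) := by
      rw [abs_of_nonneg (by linarith), habs]
      rw [show lam + 1 = 1 - -lam by ring]
      exact pow_le_pow_of_le_one (by linarith) (by linarith) (by omega)
    have e2 : |lam - 1| ^ (r - j1) ≤ 2 ^ r := by
      calc |lam - 1| ^ (r - j1) ≤ 2 ^ (r - j1) := by
            refine pow_le_pow_left₀ (abs_nonneg _) ?_ _
            rw [abs_of_nonpos (by linarith)]; linarith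
        _ ≤ 2 ^ r := pow_le_pow_right₀ (by norm_num) (by omega)
    exact mul_le_mul e2 e1 (by positivity) (by positivity)

set_option maxHeartbeats 1000000

lemma core (r : ℕ) (lam : ℝ) (hlam : |lam| ≤ 1) (k : ℕ) (hk : k < r) :
    Summable (fun s : ℕ =>
      |((((X + C lam) ^ 2 - 1) ^ r * (X + C lam) ^ s).coeff k)|) ∧
    (∑' s : ℕ, |(((X + C lam) ^ 2 - 1) ^ r * (X + C lam) ^ s).coeff k|) ≤ 8 ^ r := by
  classical
  have hP : ((X + C lam) ^ 2 - 1 : Polynomial ℝ) ^ r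
      = ((X + C (lam - 1)) ^ r * (X + C (lam + 1)) ^ r) := by
    rw [← mul_pow]
    congr 1
    simp only [map_sub, map_add, map_one]
    ring
  set D : ℕ → ℝ := fun j => ∑ ij ∈ Finset.HasAntidiagonal.antidiagonal j,
      (r.choose ij.1 : ℝ) * (r.choose ij.2) *
        (|lam - 1| ^ (r - ij.1) * |lam + 1| ^ (r - ij.2)) with hD
  have hDnn : ∀ j, 0 ≤ D j := fun j => Finset.sum_nonneg fun ij _ => by positivity
  set G : ℕ → ℕ → ℝ := fun c s => (s.choose c : ℝ) * |lam| ^ (s - c) with hG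
  have hGnn : ∀ c s, 0 ≤ G c s := fun c s => by positivity
  -- coefficient bound
  have hco : ∀ s : ℕ, |(((X + C lam) ^ 2 - 1) ^ r * (X + C lam) ^ s).coeff k|
      ≤ ∑ jc ∈ Finset.HasAntidiagonal.antidiagonal k, D jc.1 * G jc.2 s := by
    intro s
    rw [hP, Polynomial.coeff_mul]
    refine (Finset.abs_sum_le_sum_abs _ _).trans (Finset.sum_le_sum fun jc _ => ?_)
    rw [abs_mul]
    have hQ : |((X + C lam) ^ s).coeff jc.2| = G jc.2 s := by
      rw [Polynomial.coeff_X_add_C_pow, abs_mul, abs_pow, Nat.abs_cast, mul_comm]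
    rw [hQ]
    refine mul_le_mul_of_nonneg_right ?_ (hGnn _ _)
    rw [Polynomial.coeff_mul]
    refine (Finset.abs_sum_le_sum_abs _ _).trans (Finset.sum_le_sum fun ij _ => ?_)
    rw [Polynomial.coeff_X_add_C_pow, Polynomial.coeff_X_add_C_pow]
    rw [abs_mul, abs_mul, abs_mul, abs_pow, abs_pow, Nat.abs_cast, Nat.abs_cast]
    ring_nf
    exact le_refl _
  -- per-pair summability and bound
  have hjc : ∀ jc ∈ Finset.HasAntidiagonal.antidiagonal k,
      Summable (fun s => D jc.1 * G jc.2 s) ∧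
      (∑' s, D jc.1 * G jc.2 s) ≤ (2 : ℝ) ^ r * ((2 * r).choose jc.1) := by
    intro jc hm
    have hjck : jc.1 + jc.2 = k := Finset.HasAntidiagonal.mem_antidiagonal.1 hm
    rcases lt_or_eq_of_le hlam with hx | hx
    · -- |lam| < 1
      have hxn : ‖|lam|‖ < 1 := by rwa [Real.norm_eq_abs, abs_abs]
      have hsumG' : Summable (fun n : ℕ => ((n + jc.2).choose jc.2 : ℝ) * |lam| ^ n) :=
        summable_choose_mul_geometric_of_norm_lt_one jc.2 hxn
      have hshift : ∀ n : ℕ, G jc.2 (n + jc.2) = ((n + jc.2).choose jc.2 : ℝ) * |lam| ^ n := by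
        intro n; simp only [hG]; rw [Nat.add_sub_cancel]
      have hsumG : Summable (G jc.2) := by
        rw [← summable_nat_add_iff jc.2]
        exact hsumG'.congr fun n => (hshift n).symm
      have htsumG : (∑' s, G jc.2 s) = 1 / (1 - |lam|) ^ (jc.2 + 1) := by
        rw [← Summable.sum_add_tsum_nat_add jc.2 hsumG]
        have h0 : ∑ i ∈ Finset.range jc.2, G jc.2 i = 0 := by
          refine Finset.sum_eq_zero fun i hi => ?_
          simp only [hG, Nat.choose_eq_zero_of_lt (Finset.mem_range.1 hi), Nat.cast_zero, zero_mul]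
        rw [h0, zero_add]
        rw [tsum_congr hshift]
        exact (hasSum_choose_mul_geometric_of_norm_lt_one jc.2 hxn).tsum_eq
      refine ⟨hsumG.mul_left _, ?_⟩
      rw [tsum_mul_left, htsumG]
      have hposx : (0 : ℝ) < 1 - |lam| := by linarith
      rw [mul_one_div, div_le_iff₀ (by positivity)]
      have step : D jc.1 ≤ (∑ ij ∈ Finset.HasAntidiagonal.antidiagonal jc.1,
          (r.choose ij.1 : ℝ) * (r.choose ij.2)) * (2 ^ r * (1 - |lam|) ^ (jc.2 + 1)) := by
        rw [Finset.sum_mul]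
        refine Finset.sum_le_sum fun ij hij => ?_
        have hij' : ij.1 + ij.2 = jc.1 := Finset.HasAntidiagonal.mem_antidiagonal.1 hij
        exact mul_le_mul_of_nonneg_left
          (key_pointwise lam hlam r ij.1 ij.2 jc.2 (by omega) (by omega))
          (mul_nonneg (Nat.cast_nonneg _) (Nat.cast_nonneg _))
      refine step.trans (le_of_eq ?_)
      have hvan : ((2 * r).choose jc.1 : ℝ)
          = ∑ ij ∈ Finset.HasAntidiagonal.antidiagonal jc.1, (r.choose ij.1 : ℝ) * (r.choose ij.2) := by
        rw [two_mul, Nat.add_choose_eq]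
        push_cast
        rfl
      rw [hvan]; ring
    · -- |lam| = 1
      have hD0 : D jc.1 = 0 := by
        refine Finset.sum_eq_zero fun ij hij => ?_
        have hij' : ij.1 + ij.2 = jc.1 := Finset.HasAntidiagonal.mem_antidiagonal.1 hij
        rcases (abs_eq (by norm_num : (0:ℝ) ≤ 1)).1 hx with h1 | h1
        · have : |lam - 1| = 0 := by rw [h1]; simp
          rw [this, zero_pow (by omega)]
          ring
        · have : |lam + 1| = 0 := by rw [h1]; simp
          rw [this, zero_pow (by omega)]
          ring
      rw [hD0]
      simp only [zero_mul]
      exact ⟨summable_zero, by rw [tsum_zero]; positivity⟩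
  -- assemble
  have hFsum : Summable (fun s => ∑ jc ∈ Finset.HasAntidiagonal.antidiagonal k, D jc.1 * G jc.2 s) :=
    summable_sum fun jc hm => (hjc jc hm).1
  have habs_nn : ∀ s : ℕ, (0:ℝ) ≤ |(((X + C lam) ^ 2 - 1) ^ r * (X + C lam) ^ s).coeff k| :=
    fun s => abs_nonneg _
  have hsummable : Summable (fun s : ℕ =>
      |(((X + C lam) ^ 2 - 1) ^ r * (X + C lam) ^ s).coeff k|) :=
    Summable.of_nonneg_of_le habs_nn hco hFsum
  refine ⟨hsummable, ?_⟩
  calc (∑' s : ℕ, |(((X + C lam) ^ 2 - 1) ^ r * (X + C lam) ^ s).coeff k|)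
      ≤ ∑' s : ℕ, ∑ jc ∈ Finset.HasAntidiagonal.antidiagonal k, D jc.1 * G jc.2 s :=
        Summable.tsum_le_tsum hco hsummable hFsum
    _ = ∑ jc ∈ Finset.HasAntidiagonal.antidiagonal k, ∑' s : ℕ, D jc.1 * G jc.2 s :=
        Summable.tsum_finsetSum fun jc hm => (hjc jc hm).1
    _ ≤ ∑ jc ∈ Finset.HasAntidiagonal.antidiagonal k, (2:ℝ) ^ r * ((2 * r).choose jc.1) :=
        Finset.sum_le_sum fun jc hm => (hjc jc hm).2
    _ = (2:ℝ) ^ r * ∑ jc ∈ Finset.HasAntidiagonal.antidiagonal k, ((2 * r).choose jc.1 : ℝ) := by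
        rw [Finset.mul_sum]
    _ ≤ 8 ^ r := by
        rw [Finset.Nat.sum_antidiagonal_eq_sum_range_succ_mk]
        have hsub : (∑ l ∈ Finset.range (k + 1), ((2 * r).choose l : ℝ))
            ≤ ∑ l ∈ Finset.range (2 * r + 1), ((2 * r).choose l : ℝ) := by
          refine Finset.sum_le_sum_of_subset_of_nonneg
            (Finset.range_subset_range.2 (by omega)) (fun i _ _ => by positivity)
        have hchoose : (∑ l ∈ Finset.range (2 * r + 1), ((2 * r).choose l : ℝ)) = 2 ^ (2 * r) := by
          rw [← Nat.cast_sum]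
          rw [Nat.sum_range_choose]
          push_cast
          ring
        calc (2:ℝ) ^ r * ∑ l ∈ Finset.range (k + 1), ((2 * r).choose l : ℝ)
            ≤ (2:ℝ) ^ r * 2 ^ (2 * r) := by
              refine mul_le_mul_of_nonneg_left ?_ (by positivity)
              rw [← hchoose]; exact hsub
          _ = 8 ^ r := by
              rw [pow_mul]
              rw [← mul_pow]
              norm_num

lemma jordanBlock_eq_aeval (lam : ℝ) (m : ℕ) :
    jordanBlock ℝ lam m = Polynomial.aeval (shiftMatrix ℝ m) (X + C lam) := by
  rw [map_add, Polynomial.aeval_X, Polynomial.aeval_C, jordanBlock,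
    Algebra.algebraMap_eq_smul_one]
  exact add_comm _ _

lemma block_matrix_eq (lam : ℝ) (m r s : ℕ) :
    ((jordanBlock ℝ lam m) ^ 2 - 1) ^ r * (jordanBlock ℝ lam m) ^ s
      = Polynomial.aeval (shiftMatrix ℝ m) (((X + C lam) ^ 2 - 1) ^ r * (X + C lam) ^ s) := by
  rw [map_mul, map_pow, map_pow, map_sub, map_pow, map_one, jordanBlock_eq_aeval]

lemma block_entry (r : ℕ) (lam : ℝ) (hlam : |lam| ≤ 1) {m : ℕ} (hm : m ≤ r) (u v : Fin m) :
    Summable (fun s : ℕ =>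
      |((((jordanBlock ℝ lam m) ^ 2 - 1) ^ r * (jordanBlock ℝ lam m) ^ s : Matrix (Fin m) (Fin m) ℝ) u v)|) ∧
    (∑' s : ℕ, |((((jordanBlock ℝ lam m) ^ 2 - 1) ^ r * (jordanBlock ℝ lam m) ^ s : Matrix (Fin m) (Fin m) ℝ) u v)|)
      ≤ 8 ^ r := by
  have he : ∀ s : ℕ, ((((jordanBlock ℝ lam m) ^ 2 - 1) ^ r * (jordanBlock ℝ lam m) ^ s : Matrix (Fin m) (Fin m) ℝ) u v)
      = if (u : ℕ) ≤ (v : ℕ)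
        then (((X + C lam) ^ 2 - 1) ^ r * (X + C lam) ^ s).coeff ((v : ℕ) - (u : ℕ))
        else 0 := by
    intro s; rw [block_matrix_eq, aeval_shift_apply]
  by_cases huv : (u : ℕ) ≤ (v : ℕ)
  · have hk : (v : ℕ) - (u : ℕ) < r := by have := v.isLt; omega
    obtain ⟨h1, h2⟩ := core r lam hlam _ hk
    constructor
    · refine h1.congr fun s => ?_
      rw [he s, if_pos huv]
    · refine le_trans (le_of_eq (tsum_congr fun s => ?_)) h2
      rw [he s, if_pos huv]
  · constructor
    · refine summable_zero.congr fun s => ?_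
      rw [he s, if_neg huv, abs_zero]
    · calc (∑' s : ℕ, |((((jordanBlock ℝ lam m) ^ 2 - 1) ^ r * (jordanBlock ℝ lam m) ^ s :
              Matrix (Fin m) (Fin m) ℝ) u v)|)
          = ∑' _ : ℕ, (0:ℝ) := tsum_congr fun s => by rw [he s, if_neg huv, abs_zero]
        _ = 0 := tsum_zero
        _ ≤ 8 ^ r := by positivity

lemma sconj_pow {n : ℕ} {σ : Type*} [Fintype σ] [DecidableEq σ]
    (S : Matrix (Fin n) σ ℝ) (S' : Matrix σ (Fin n) ℝ)
    (h1 : S * S' = 1) (h2 : S' * S = 1) (M : Matrix σ σ ℝ) :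
    ∀ t : ℕ, (S * M * S') ^ t = S * M ^ t * S'
  | 0 => by rw [pow_zero, pow_zero, Matrix.mul_one, h1]
  | (t + 1) => by
      rw [pow_succ, pow_succ, sconj_pow S S' h1 h2 M t]
      have h3 : S * M ^ t * S' * (S * M * S') = S * M ^ t * ((S' * S) * (M * S')) := by
        simp only [Matrix.mul_assoc]
      rw [h3, h2, Matrix.one_mul]
      simp only [Matrix.mul_assoc]

lemma sconj_mul {n : ℕ} {σ : Type*} [Fintype σ] [DecidableEq σ]
    (S : Matrix (Fin n) σ ℝ) (S' : Matrix σ (Fin n) ℝ)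
    (h2 : S' * S = 1) (M N : Matrix σ σ ℝ) :
    (S * M * S') * (S * N * S') = S * (M * N) * S' := by
  have h3 : S * M * S' * (S * N * S') = S * M * ((S' * S) * (N * S')) := by
    simp only [Matrix.mul_assoc]
  rw [h3, h2, Matrix.one_mul]
  simp only [Matrix.mul_assoc]

lemma card_eq_of_inv {n : ℕ} {σ : Type*} [Fintype σ] [DecidableEq σ]
    (S : Matrix (Fin n) σ ℝ) (S' : Matrix σ (Fin n) ℝ)
    (h1 : S * S' = 1) (h2 : S' * S = 1) : Fintype.card σ = n := by
  let e : (σ → ℝ) ≃ₗ[ℝ] (Fin n → ℝ) := LinearEquiv.ofLinear S.mulVecLin S'.mulVecLin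
    (by rw [← Matrix.mulVecLin_mul, h1, Matrix.mulVecLin_one])
    (by rw [← Matrix.mulVecLin_mul, h2, Matrix.mulVecLin_one])
  have := e.finrank_eq
  simpa [Module.finrank_fintype_fun_eq_card] using this

lemma blockDiagonal'_filtered {b : ℕ} (msize : Fin b → ℕ) (lam : Fin b → ℝ) (r s : ℕ) :
    ((Matrix.blockDiagonal' fun i => jordanBlock ℝ (lam i) (msize i)) ^ 2 - 1) ^ r *
      (Matrix.blockDiagonal' fun i => jordanBlock ℝ (lam i) (msize i)) ^ s
    = Matrix.blockDiagonal' (fun i =>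
        ((jordanBlock ℝ (lam i) (msize i)) ^ 2 - 1) ^ r * (jordanBlock ℝ (lam i) (msize i)) ^ s) := by
  let φ := Matrix.blockDiagonal'RingHom (fun i : Fin b => Fin (msize i)) ℝ
  have h0 : Matrix.blockDiagonal' (fun i =>
      ((jordanBlock ℝ (lam i) (msize i)) ^ 2 - 1) ^ r * (jordanBlock ℝ (lam i) (msize i)) ^ s)
      = φ ((((fun i => jordanBlock ℝ (lam i) (msize i)) ^ 2 - 1) ^ r) *
          ((fun i => jordanBlock ℝ (lam i) (msize i)) ^ s)) := rfl
  rw [h0, map_mul, map_pow, map_pow, map_sub, map_pow, map_one]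
  rfl


/-- gap-free filtered Jordan bound.  If `A` has a real Jordan form with
blocks of size at most `r` and real eigenvalues in `[−1,1]`, then
`∑_{s=0}^∞ ‖(A² − I)^r A^s‖ ≤ r (2e²)^r n κ_A`, independently of any spectral gap. -/
theorem gap_free_filtered_jordan_bound
    (n r : ℕ) (A : Matrix (Fin n) (Fin n) ℝ) (κA : ℝ)
    (hA : HasRealJordanForm n r A κA) :
    Summable (fun s : ℕ => opNorm ((A ^ 2 - 1) ^ r * A ^ s)) ∧
    (∑' s : ℕ, opNorm ((A ^ 2 - 1) ^ r * A ^ s))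
      ≤ (r : ℝ) * (2 * Real.exp 2) ^ r * n * κA := by
  classical
  obtain ⟨b, msize, lam, S, S', hsize, hIcc, hSS', hS'S, hAeq, hκ⟩ := hA
  have hlam : ∀ i, |lam i| ≤ 1 := fun i => abs_le.2 ⟨(hIcc i).1, (hIcc i).2⟩
  set J : Matrix ((i : Fin b) × Fin (msize i)) ((i : Fin b) × Fin (msize i)) ℝ :=
    Matrix.blockDiagonal' (fun i => jordanBlock ℝ (lam i) (msize i)) with hJ
  set E : ℕ → Matrix ((i : Fin b) × Fin (msize i)) ((i : Fin b) × Fin (msize i)) ℝ :=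
    fun s => (J ^ 2 - 1) ^ r * J ^ s with hEdef
  -- conjugation
  have hpow : ∀ t : ℕ, A ^ t = S * J ^ t * S' := fun t => by
    rw [hAeq]; exact sconj_pow S S' hSS' hS'S J t
  have hA2 : A ^ 2 - 1 = S * (J ^ 2 - 1) * S' := by
    have h3 : S * (J ^ 2 - 1) * S' = S * J ^ 2 * S' - 1 := by
      rw [Matrix.mul_sub, Matrix.mul_one, Matrix.sub_mul, hSS']
    rw [h3, hpow 2]
  have hconj : ∀ s : ℕ, (A ^ 2 - 1) ^ r * A ^ s = S * E s * S' := by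
    intro s
    have h4 : (A ^ 2 - 1) ^ r = S * (J ^ 2 - 1) ^ r * S' := by
      rw [hA2]; exact sconj_pow S S' hSS' hS'S _ r
    rw [h4, hpow s, sconj_mul S S' hS'S]
  -- entrywise. E s p q entries
  have hEb : ∀ s : ℕ, E s = Matrix.blockDiagonal' (fun i =>
      ((jordanBlock ℝ (lam i) (msize i)) ^ 2 - 1) ^ r * (jordanBlock ℝ (lam i) (msize i)) ^ s) :=
    fun s => blockDiagonal'_filtered msize lam r s
  have hent : ∀ p q : (i : Fin b) × Fin (msize i),
      Summable (fun s : ℕ => |E s p q|) ∧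
      (∑' s : ℕ, |E s p q|) ≤ (if p.1 = q.1 then (8:ℝ) ^ r else 0) := by
    rintro ⟨i, u⟩ ⟨i', v⟩
    by_cases h : i = i'
    · subst h
      have heq : ∀ s : ℕ, E s ⟨i, u⟩ ⟨i, v⟩
          = (((jordanBlock ℝ (lam i) (msize i)) ^ 2 - 1) ^ r *
              (jordanBlock ℝ (lam i) (msize i)) ^ s : Matrix (Fin (msize i)) (Fin (msize i)) ℝ) u v := by
        intro s; rw [hEb s, Matrix.blockDiagonal'_apply_eq]
      obtain ⟨hs1, hs2⟩ := block_entry r (lam i) (hlam i) (hsize i) u v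
      rw [if_pos rfl]
      constructor
      · exact hs1.congr fun s => by rw [heq s]
      · refine le_trans (le_of_eq (tsum_congr fun s => by rw [heq s])) hs2
    · have heq : ∀ s : ℕ, E s ⟨i, u⟩ ⟨i', v⟩ = 0 := by
        intro s; rw [hEb s]; exact Matrix.blockDiagonal'_apply_ne
          (fun j => ((jordanBlock ℝ (lam j) (msize j)) ^ 2 - 1) ^ r *
            (jordanBlock ℝ (lam j) (msize j)) ^ s) (k := i) (k' := i') u v h
      rw [if_neg h]
      constructor
      · exact summable_zero.congr fun s => by rw [heq s, abs_zero]
      · calc (∑' s : ℕ, |E s ⟨i, u⟩ ⟨i', v⟩|) = ∑' _ : ℕ, (0:ℝ) :=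
              tsum_congr fun s => by rw [heq s, abs_zero]
          _ = 0 := tsum_zero
          _ ≤ 0 := le_refl _
  -- totals
  set tot : ℕ → ℝ := fun s => ∑ p : (i : Fin b) × Fin (msize i),
      ∑ q : (i : Fin b) × Fin (msize i), |E s p q| with htot
  have htot_sum : Summable tot :=
    summable_sum fun p _ => summable_sum fun q _ => (hent p q).1
  have htot_nonneg : ∀ s, 0 ≤ tot s := fun s =>
    Finset.sum_nonneg fun p _ => Finset.sum_nonneg fun q _ => abs_nonneg _
  have hcount : (∑ p : (i : Fin b) × Fin (msize i),
      ∑ q : (i : Fin b) × Fin (msize i), (if p.1 = q.1 then (8:ℝ) ^ r else 0))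
      ≤ (r : ℝ) * 8 ^ r * n := by
    have hinner : ∀ p : (i : Fin b) × Fin (msize i),
        (∑ q : (i : Fin b) × Fin (msize i), (if p.1 = q.1 then (8:ℝ) ^ r else 0))
        = (msize p.1 : ℝ) * 8 ^ r := by
      intro p
      rw [← Finset.univ_sigma_univ, Finset.sum_sigma]
      have hstep : ∀ i' : Fin b, (∑ _v : Fin (msize i'), (if p.1 = i' then (8:ℝ) ^ r else 0))
          = (if p.1 = i' then (msize i' : ℝ) * 8 ^ r else 0) := by
        intro i'
        by_cases h : p.1 = i'
        · rw [if_pos h, Finset.sum_const, Finset.card_univ, Fintype.card_fin, if_pos h,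
            nsmul_eq_mul]
        · rw [if_neg h, Finset.sum_const, if_neg h, smul_zero]
      rw [Finset.sum_congr rfl fun i' _ => hstep i']
      rw [Finset.sum_ite_eq Finset.univ p.1 (fun i' => (msize i' : ℝ) * 8 ^ r)]
      rw [if_pos (Finset.mem_univ _)]
    rw [Finset.sum_congr rfl fun p _ => hinner p]
    rw [← Finset.univ_sigma_univ, Finset.sum_sigma]
    have hb1 : ∀ i : Fin b, (∑ _u : Fin (msize i), (msize i : ℝ) * 8 ^ r)
        = (msize i : ℝ) * (msize i : ℝ) * 8 ^ r := by
      intro i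
      rw [Finset.sum_const, Finset.card_univ, Fintype.card_fin, nsmul_eq_mul]
      ring
    rw [Finset.sum_congr rfl fun i _ => hb1 i]
    have hcard : (∑ i : Fin b, (msize i : ℝ)) = n := by
      have h1 : Fintype.card ((i : Fin b) × Fin (msize i)) = n := card_eq_of_inv S S' hSS' hS'S
      rw [Fintype.card_sigma] at h1
      simp only [Fintype.card_fin] at h1
      exact_mod_cast congrArg (Nat.cast : ℕ → ℝ) h1
    calc (∑ i : Fin b, (msize i : ℝ) * (msize i : ℝ) * 8 ^ r)
        ≤ ∑ i : Fin b, (r : ℝ) * (msize i : ℝ) * 8 ^ r := by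
          refine Finset.sum_le_sum fun i _ => ?_
          have : (msize i : ℝ) ≤ (r : ℝ) := by exact_mod_cast hsize i
          have h8 : (0:ℝ) ≤ (8:ℝ) ^ r := by positivity
          refine mul_le_mul_of_nonneg_right ?_ h8
          exact mul_le_mul_of_nonneg_right this (Nat.cast_nonneg _)
      _ = (r : ℝ) * 8 ^ r * ∑ i : Fin b, (msize i : ℝ) := by
          rw [Finset.mul_sum]; exact Finset.sum_congr rfl fun i _ => by ring
      _ = (r : ℝ) * 8 ^ r * n := by rw [hcard]
  have htot_tsum : (∑' s, tot s) ≤ (r : ℝ) * 8 ^ r * n := by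
    refine le_trans ?_ hcount
    rw [htot]
    rw [Summable.tsum_finsetSum fun p _ => summable_sum fun q _ => (hent p q).1]
    refine Finset.sum_le_sum fun p _ => ?_
    rw [Summable.tsum_finsetSum fun q _ => (hent p q).1]
    exact Finset.sum_le_sum fun q _ => (hent p q).2
  -- norm bound per s
  have hnorm : ∀ s : ℕ, opNorm ((A ^ 2 - 1) ^ r * A ^ s) ≤ ‖S‖ * ‖S'‖ * tot s := by
    intro s
    rw [opNorm_eq_norm, hconj s]
    calc ‖S * E s * S'‖ ≤ ‖S * E s‖ * ‖S'‖ := Matrix.l2_opNorm_mul _ _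
      _ ≤ (‖S‖ * ‖E s‖) * ‖S'‖ :=
          mul_le_mul_of_nonneg_right (Matrix.l2_opNorm_mul _ _) (norm_nonneg _)
      _ ≤ (‖S‖ * tot s) * ‖S'‖ := by
          refine mul_le_mul_of_nonneg_right
            (mul_le_mul_of_nonneg_left ?_ (norm_nonneg _)) (norm_nonneg _)
          exact norm_le_sum_abs (E s)
      _ = ‖S‖ * ‖S'‖ * tot s := by ring
  have hmajsum : Summable (fun s => ‖S‖ * ‖S'‖ * tot s) := htot_sum.mul_left _
  have hopnn : ∀ s : ℕ, 0 ≤ opNorm ((A ^ 2 - 1) ^ r * A ^ s) := fun s => by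
    rw [opNorm_eq_norm]; exact norm_nonneg _
  have hsummable : Summable (fun s : ℕ => opNorm ((A ^ 2 - 1) ^ r * A ^ s)) :=
    Summable.of_nonneg_of_le hopnn (fun s => hnorm s) hmajsum
  refine ⟨hsummable, ?_⟩
  have hSs : 0 ≤ ‖S‖ * ‖S'‖ := mul_nonneg (norm_nonneg _) (norm_nonneg _)
  have h8le : (8:ℝ) ^ r ≤ (2 * Real.exp 2) ^ r := by
    refine pow_le_pow_left₀ (by norm_num) ?_ r
    have he2 : Real.exp 2 = Real.exp 1 * Real.exp 1 := by rw [← Real.exp_add]; norm_num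
    nlinarith [Real.exp_one_gt_d9]
  calc (∑' s : ℕ, opNorm ((A ^ 2 - 1) ^ r * A ^ s))
      ≤ ∑' s : ℕ, ‖S‖ * ‖S'‖ * tot s := Summable.tsum_le_tsum hnorm hsummable hmajsum
    _ = ‖S‖ * ‖S'‖ * ∑' s, tot s := tsum_mul_left
    _ ≤ ‖S‖ * ‖S'‖ * ((r : ℝ) * 8 ^ r * n) :=
        mul_le_mul_of_nonneg_left htot_tsum hSs
    _ ≤ ‖S‖ * ‖S'‖ * ((r : ℝ) * (2 * Real.exp 2) ^ r * n) := by
        refine mul_le_mul_of_nonneg_left ?_ hSs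
        refine mul_le_mul_of_nonneg_right
          (mul_le_mul_of_nonneg_left h8le (Nat.cast_nonneg r)) (Nat.cast_nonneg n)
    _ = (r : ℝ) * (2 * Real.exp 2) ^ r * n * κA := by
        rw [hκ, opNorm_eq_norm, opNorm_eq_norm]; ring
end
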